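/- Failure of second-order identifiability for the Gaussian location–covariance family (Proposition 4.1): For every d ≥ 1, the family of d-variate Gaussian densities {f(·|θ,Σ) : θ ∈ ℝ^d, Σ ∈ S_d^{++}}, where f(x|θ,Σ) = (2π)^{−d/2} det(Σ)^{−1/2} exp(−(x−θ)ᵀΣ^{−1}(x−θ)/2), is NOT identifiable in the second order. In fact this already fails with k = 1: for every (θ,Σ) ∈ ℝ^d × S_d^{++} and every nonzero ν ∈ ℝ^d, taking α = 0, β = 0, η = 0 and the nonzero symmetric matrix γ = −2ννᵀ, one has νᵀ(∂²f/∂θ∂θᵀ(x|θ,Σ))ν + tr((∂f/∂Σ(x|θ,Σ))ᵀ γ) = 0 for every x ∈ ℝ^d, so the coefficients required to vanish in the definition of second-order identifiability need not vanish. -/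

import Mathlib

open MeasureTheory Matrix

noncomputable section

attribute [local instance] Matrix.normedAddCommGroup Matrix.normedSpace

abbrev Vec (d : ℕ) := Fin d → ℝ
abbrev Mat (d : ℕ) := Matrix (Fin d) (Fin d) ℝ

/-- The `d`-variate Gaussian density with mean `θ` and covariance `M`. -/
def gaussDensity (d : ℕ) (θ : Vec d) (M : Mat d) (x : Vec d) : ℝ :=
  ((2 * Real.pi) ^ ((d : ℝ) / 2) * Real.sqrt M.det)⁻¹ *
    Real.exp (-((x - θ) ⬝ᵥ (M⁻¹ *ᵥ (x - θ))) / 2)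

/-- Directional derivative in the location parameter: `βᵀ ∂f/∂θ`. -/
def dTheta {d d₁ d₂ : ℕ} (f : Vec d₁ × Mat d₂ → Vec d → ℝ)
    (p : Vec d₁ × Mat d₂) (β : Vec d₁) (x : Vec d) : ℝ :=
  deriv (fun t : ℝ => f (p.1 + t • β, p.2) x) 0

/-- Directional derivative in the matrix parameter: `tr((∂f/∂Σ)ᵀ γ)`. -/
def dSigma {d d₁ d₂ : ℕ} (f : Vec d₁ × Mat d₂ → Vec d → ℝ)
    (p : Vec d₁ × Mat d₂) (γ : Mat d₂) (x : Vec d) : ℝ :=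
  deriv (fun t : ℝ => f (p.1, p.2 + t • γ) x) 0

/-- Second directional derivative in the location parameter: `νᵀ (∂²f/∂θ∂θᵀ) ν`. -/
def dTheta2 {d d₁ d₂ : ℕ} (f : Vec d₁ × Mat d₂ → Vec d → ℝ)
    (p : Vec d₁ × Mat d₂) (ν : Vec d₁) (x : Vec d) : ℝ :=
  iteratedDeriv 2 (fun t : ℝ => f (p.1 + t • ν, p.2) x) 0

/-- Second directional derivative in the matrix parameter:
`tr((∂/∂Σ (tr((∂f/∂Σ)ᵀ η)))ᵀ η)`. -/
def dSigma2 {d d₁ d₂ : ℕ} (f : Vec d₁ × Mat d₂ → Vec d → ℝ)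
    (p : Vec d₁ × Mat d₂) (η : Mat d₂) (x : Vec d) : ℝ :=
  iteratedDeriv 2 (fun t : ℝ => f (p.1, p.2 + t • η) x) 0

/-- Mixed second directional derivative: `νᵀ ∂/∂θ (tr((∂f/∂Σ)ᵀ η))`. -/
def dMixed {d d₁ d₂ : ℕ} (f : Vec d₁ × Mat d₂ → Vec d → ℝ)
    (p : Vec d₁ × Mat d₂) (ν : Vec d₁) (η : Mat d₂) (x : Vec d) : ℝ :=
  deriv (fun s : ℝ => deriv (fun t : ℝ => f (p.1 + s • ν, p.2 + t • η) x) 0) 0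

/-- Second-order identifiability of the family `f` over the parameter set `S`,
with respect to Lebesgue measure restricted to `X`. -/
def SecondOrderIdent {d d₁ d₂ : ℕ} (X : Set (Vec d))
    (f : Vec d₁ × Mat d₂ → Vec d → ℝ) (S : Set (Vec d₁ × Mat d₂)) : Prop :=
  (∀ x ∈ X, ∀ p ∈ S, ContDiffAt ℝ 2 (fun q => f q x) p) ∧
  ∀ (k : ℕ) (φ : Fin k → Vec d₁ × Mat d₂), (∀ i, φ i ∈ S) → Function.Injective φ →
    ∀ (α : Fin k → ℝ) (β ν : Fin k → Vec d₁) (γ η : Fin k → Mat d₂),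
      (∀ i, (γ i).IsSymm) → (∀ i, (η i).IsSymm) →
      (∀ᵐ x ∂(volume.restrict X),
        ∑ i, (α i * f (φ i) x + dTheta f (φ i) (β i) x + dTheta2 f (φ i) (ν i) x
          + dSigma f (φ i) (γ i) x + 2 * dMixed f (φ i) (ν i) (η i) x
          + dSigma2 f (φ i) (η i) x) = 0) →
      ∀ i, α i = 0 ∧ β i = 0 ∧ ν i = 0 ∧ γ i = 0 ∧ η i = 0

-- symmetric quadratic form swap
lemma dot_symm {d : ℕ} {A : Mat d} (hA : Aᵀ = A) (u w : Vec d) :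
    u ⬝ᵥ A *ᵥ w = w ⬝ᵥ A *ᵥ u := by
  rw [Matrix.dotProduct_mulVec, ← hA, Matrix.vecMul_transpose, dotProduct_comm, hA]

lemma mul_vecMulVec {d : ℕ} (A : Mat d) (u v : Vec d) :
    A * vecMulVec u v = vecMulVec (A *ᵥ u) v := by
  ext i j
  simp [Matrix.mul_apply, vecMulVec_apply, Matrix.mulVec, dotProduct,
    Finset.sum_mul, mul_assoc]

lemma vecMulVec_mul {d : ℕ} (A : Mat d) (u v : Vec d) :
    vecMulVec u v * A = vecMulVec u (v ᵥ* A) := by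
  ext i j
  simp [Matrix.mul_apply, vecMulVec_apply, Matrix.vecMul, dotProduct,
    Finset.mul_sum, mul_assoc]

lemma vecMulVec_mul_vecMulVec {d : ℕ} (u v w z : Vec d) :
    vecMulVec u v * vecMulVec w z = (v ⬝ᵥ w) • vecMulVec u z := by
  ext i j
  simp only [Matrix.mul_apply, vecMulVec_apply, Matrix.smul_apply, smul_eq_mul,
    dotProduct, Finset.sum_mul]
  exact Finset.sum_congr rfl fun k _ => by ring

lemma vecMulVec_mulVec' {d : ℕ} (u v w : Vec d) :
    vecMulVec u v *ᵥ w = (v ⬝ᵥ w) • u := by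
  ext i
  simp only [Matrix.mulVec, dotProduct, vecMulVec_apply, Pi.smul_apply, smul_eq_mul,
    Finset.sum_mul]
  exact Finset.sum_congr rfl fun k _ => by ring

-- derivative of the theta-direction curve
lemma hasDerivAt_gauss_theta (C q0 b a t : ℝ) :
    HasDerivAt (fun t : ℝ => C * Real.exp (-(q0 - 2*t*b + t^2*a)/2))
      (C * Real.exp (-(q0 - 2*t*b + t^2*a)/2) * (b - t*a)) t := by
  have hq : HasDerivAt (fun t : ℝ => -(q0 - 2*t*b + t^2*a)/2) (b - t*a) t := by
    have h1 : HasDerivAt (fun t : ℝ => q0 - 2*t*b + t^2*a) (-(2*b) + 2*t*a) t := by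
      have ht2 : HasDerivAt (fun t : ℝ => t^2*a) (2*t*a) t := by
        simpa [mul_comm, mul_assoc] using ((hasDerivAt_pow 2 t).mul_const a)
      have htb : HasDerivAt (fun t : ℝ => 2*t*b) (2*b) t := by
        simpa [mul_assoc, mul_comm] using ((hasDerivAt_id t).const_mul 2).mul_const b
      simpa using ((hasDerivAt_const t q0).fun_sub htb).fun_add ht2
    have := (h1.neg).div_const 2
    refine this.congr_deriv ?_
    ring
  simpa [mul_assoc] using (hq.exp.const_mul C)

lemma iteratedDeriv_two_gauss_theta (C q0 b a : ℝ) :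
    iteratedDeriv 2 (fun t : ℝ => C * Real.exp (-(q0 - 2*t*b + t^2*a)/2)) 0
      = C * Real.exp (-q0/2) * (b^2 - a) := by
  rw [iteratedDeriv_succ, iteratedDeriv_one]
  have hd : deriv (fun t : ℝ => C * Real.exp (-(q0 - 2*t*b + t^2*a)/2))
      = fun t : ℝ => (C * Real.exp (-(q0 - 2*t*b + t^2*a)/2)) * (b - t*a) := by
    funext t; exact (hasDerivAt_gauss_theta C q0 b a t).deriv
  rw [hd]
  have h1 : HasDerivAt (fun t : ℝ => (C * Real.exp (-(q0 - 2*t*b + t^2*a)/2)) * (b - t*a))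
      (C * Real.exp (-(q0 - 2*0*b + 0^2*a)/2) * (b - 0*a) * (b - 0*a)
        + (C * Real.exp (-(q0 - 2*0*b + 0^2*a)/2)) * (-a)) 0 := by
    have hlin : HasDerivAt (fun t : ℝ => b - t*a) (-a) (0:ℝ) := by
      simpa using ((hasDerivAt_const (0:ℝ) b).fun_sub ((hasDerivAt_id (0:ℝ)).mul_const a))
    exact (hasDerivAt_gauss_theta C q0 b a 0).mul hlin
  rw [h1.deriv]
  ring_nf

lemma hasDerivAt_gauss_sigma (C q0 a b : ℝ) :
    HasDerivAt (fun t : ℝ =>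
        C * (Real.sqrt (1 - 2*t*a))⁻¹ * Real.exp (-(q0 + 2*t/(1 - 2*t*a)*b^2)/2))
      (C * Real.exp (-q0/2) * (a - b^2)) 0 := by
  have hφ : HasDerivAt (fun t : ℝ => 1 - 2*t*a) (-(2*a)) (0:ℝ) := by
    simpa [mul_assoc] using
      ((hasDerivAt_const (0:ℝ) 1).fun_sub (((hasDerivAt_id (0:ℝ)).const_mul 2).mul_const a))
  have hφ0 : (1 : ℝ) - 2*0*a = 1 := by ring
  -- sqrt of φ
  have hs : HasDerivAt (fun t : ℝ => Real.sqrt (1 - 2*t*a)) (-a) (0:ℝ) := by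
    have := (Real.hasDerivAt_sqrt (by rw [hφ0]; norm_num : (1:ℝ) - 2*0*a ≠ 0)).comp 0 hφ
    refine this.congr_deriv ?_
    rw [hφ0, Real.sqrt_one]
    ring
  -- inverse of sqrt
  have hinv : HasDerivAt (fun t : ℝ => (Real.sqrt (1 - 2*t*a))⁻¹) a (0:ℝ) := by
    have hne : Real.sqrt (1 - 2*0*a) ≠ 0 := by rw [hφ0, Real.sqrt_one]; norm_num
    have := hs.inv hne
    refine this.congr_deriv ?_
    rw [hφ0, Real.sqrt_one]
    ring
  -- ratio 2t/φ
  have hr : HasDerivAt (fun t : ℝ => 2*t/(1 - 2*t*a)) 2 (0:ℝ) := by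
    have h2t : HasDerivAt (fun t : ℝ => 2*t) 2 (0:ℝ) := by
      simpa using (hasDerivAt_id (0:ℝ)).const_mul 2
    have := h2t.div hφ (by rw [hφ0]; norm_num)
    refine this.congr_deriv ?_
    rw [hφ0]
    ring
  -- exponent
  have he : HasDerivAt (fun t : ℝ => Real.exp (-(q0 + 2*t/(1 - 2*t*a)*b^2)/2))
      (Real.exp (-q0/2) * (-(b^2))) (0:ℝ) := by
    have harg : HasDerivAt (fun t : ℝ => -(q0 + 2*t/(1 - 2*t*a)*b^2)/2) (-(b^2)) (0:ℝ) := by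
      have := (((hasDerivAt_const (0:ℝ) q0).add (hr.mul_const (b^2))).neg).div_const 2
      refine this.congr_deriv ?_
      ring
    have := harg.exp
    convert this using 2 <;> simp
  -- assemble the product
  have hC : HasDerivAt (fun t : ℝ => C * (Real.sqrt (1 - 2*t*a))⁻¹) (C * a) (0:ℝ) :=
    hinv.const_mul C
  have := hC.mul he
  refine this.congr_deriv ?_
  rw [hφ0, Real.sqrt_one]
  simp
  ring

lemma posdef_transpose_inv {d : ℕ} {M : Mat d} (hM : M.PosDef) : (M⁻¹)ᵀ = M⁻¹ := by
  have h : Mᵀ = M := by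
    have := hM.isHermitian.eq
    simpa [Matrix.conjTranspose_eq_transpose_of_trivial] using this
  rw [Matrix.transpose_nonsing_inv, h]

lemma posdef_mul_inv {d : ℕ} {M : Mat d} (hM : M.PosDef) : M * M⁻¹ = 1 :=
  Matrix.mul_nonsing_inv M (isUnit_iff_ne_zero.mpr (ne_of_gt hM.det_pos))

lemma det_formula {d : ℕ} {M : Mat d} (hM : M.PosDef) (ν : Vec d) (t : ℝ) :
    (M + t • ((-2:ℝ) • vecMulVec ν ν)).det
      = M.det * (1 - 2*t*(ν ⬝ᵥ M⁻¹ *ᵥ ν)) := by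
  have key : M + t • ((-2:ℝ) • vecMulVec ν ν)
      = M * (1 + vecMulVec ((-2*t) • (M⁻¹ *ᵥ ν)) ν) := by
    have h1 : vecMulVec ((-2*t) • (M⁻¹ *ᵥ ν)) ν = (-2*t) • (M⁻¹ * vecMulVec ν ν) := by
      rw [mul_vecMulVec]
      ext i j
      simp [vecMulVec_apply, mul_assoc]
    rw [h1, Matrix.mul_add, Matrix.mul_one, mul_smul_comm, ← Matrix.mul_assoc,
      posdef_mul_inv hM, Matrix.one_mul, smul_smul]
    norm_num
    rw [mul_comm]
  rw [key, Matrix.det_mul, vecMulVec_eq Unit, Matrix.det_one_add_replicateCol_mul_replicateRow]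
  rw [dotProduct_smul]
  simp only [smul_eq_mul]
  ring

lemma inv_formula {d : ℕ} {M : Mat d} (hM : M.PosDef) (ν : Vec d) (t : ℝ)
    (h : 1 - 2*t*(ν ⬝ᵥ M⁻¹ *ᵥ ν) ≠ 0) :
    (M + t • ((-2:ℝ) • vecMulVec ν ν))⁻¹
      = M⁻¹ + (2*t/(1 - 2*t*(ν ⬝ᵥ M⁻¹ *ᵥ ν))) •
          vecMulVec (M⁻¹ *ᵥ ν) (M⁻¹ *ᵥ ν) := by
  apply Matrix.inv_eq_right_inv
  set a := ν ⬝ᵥ M⁻¹ *ᵥ ν with ha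
  set s := 2*t/(1 - 2*t*a) with hs
  set u := M⁻¹ *ᵥ ν with hu
  have hMA : M * M⁻¹ = 1 := posdef_mul_inv hM
  have hMu : M *ᵥ u = ν := by
    rw [hu, Matrix.mulVec_mulVec, hMA, Matrix.one_mulVec]
  have hvA : ν ᵥ* M⁻¹ = u := by
    rw [← posdef_transpose_inv hM, Matrix.vecMul_transpose, hu]
  have hnu : ν ⬝ᵥ u = a := by rw [hu, ha]
  have e1 : M * (M⁻¹ + s • vecMulVec u u) = 1 + s • vecMulVec ν u := by
    rw [Matrix.mul_add, hMA, mul_smul_comm, mul_vecMulVec, hMu]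
  have e2 : (t • ((-2:ℝ) • vecMulVec ν ν)) * (M⁻¹ + s • vecMulVec u u)
      = (-2*t) • vecMulVec ν u + (-2*t*s*a) • vecMulVec ν u := by
    rw [smul_smul, Matrix.mul_add, smul_mul_assoc, vecMulVec_mul, hvA,
      smul_mul_assoc, mul_smul_comm, vecMulVec_mul_vecMulVec, hnu, smul_smul, smul_smul]
    congr 1
    · congr 1; ring
    · congr 1; ring
  rw [Matrix.add_mul, e1, e2, add_assoc, ← add_smul, ← add_smul]
  have : s + (-2*t + -2*t*s*a) = 0 := by
    rw [hs]
    field_simp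
    ring
  rw [this, zero_smul, add_zero]

lemma gauss_key {d : ℕ} (x θ : Vec d) (M : Mat d) (hM : M.PosDef) (ν : Vec d) :
    iteratedDeriv 2 (fun t : ℝ => gaussDensity d (θ + t • ν) M x) 0
      + deriv (fun t : ℝ =>
          gaussDensity d θ (M + t • ((-2 : ℝ) • vecMulVec ν ν)) x) 0 = 0 := by
  have hAsym : (M⁻¹)ᵀ = M⁻¹ := posdef_transpose_inv hM
  set v : Vec d := x - θ with hv
  set a : ℝ := ν ⬝ᵥ M⁻¹ *ᵥ ν with ha
  set b : ℝ := ν ⬝ᵥ M⁻¹ *ᵥ v with hb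
  set q0 : ℝ := v ⬝ᵥ M⁻¹ *ᵥ v with hq0
  set C : ℝ := ((2 * Real.pi) ^ ((d : ℝ) / 2) * Real.sqrt M.det)⁻¹ with hC
  -- theta part
  have h1 : (fun t : ℝ => gaussDensity d (θ + t • ν) M x)
      = fun t => C * Real.exp (-(q0 - 2*t*b + t^2*a)/2) := by
    funext t
    have hx : x - (θ + t • ν) = v - t • ν := by rw [hv]; abel
    unfold gaussDensity
    rw [hx]
    congr 2
    have hquad : (v - t • ν) ⬝ᵥ M⁻¹ *ᵥ (v - t • ν) = q0 - 2*t*b + t^2*a := by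
      simp only [Matrix.mulVec_sub, Matrix.mulVec_smul, sub_dotProduct,
        dotProduct_sub, smul_dotProduct, dotProduct_smul, smul_eq_mul]
      rw [dot_symm hAsym v ν, ← ha, ← hb, ← hq0]
      ring
    rw [hquad]
  have h2 : iteratedDeriv 2 (fun t : ℝ => gaussDensity d (θ + t • ν) M x) 0
      = C * Real.exp (-q0/2) * (b^2 - a) := by
    rw [h1, iteratedDeriv_two_gauss_theta]
  -- sigma part
  have hev : (fun t : ℝ => gaussDensity d θ (M + t • ((-2:ℝ) • vecMulVec ν ν)) x)
      =ᶠ[nhds (0:ℝ)] fun t =>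
        C * (Real.sqrt (1 - 2*t*a))⁻¹ * Real.exp (-(q0 + 2*t/(1 - 2*t*a)*b^2)/2) := by
    have hcont : ContinuousAt (fun t : ℝ => 1 - 2*t*a) 0 := by fun_prop
    have hpos : ∀ᶠ t : ℝ in nhds 0, 0 < 1 - 2*t*a := by
      have h0 : (1:ℝ) - 2*0*a = 1 := by ring
      have := hcont.eventually (eventually_gt_nhds
        (by show (0:ℝ) < 1 - 2*0*a; rw [h0]; norm_num :
          (0:ℝ) < (fun t : ℝ => 1 - 2*t*a) 0))
      simpa using this
    filter_upwards [hpos] with t ht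
    have hφ : 1 - 2*t*(ν ⬝ᵥ M⁻¹ *ᵥ ν) ≠ 0 := by rw [← ha]; exact ne_of_gt ht
    unfold gaussDensity
    rw [det_formula hM ν t, inv_formula hM ν t hφ, ← ha]
    have hquad : v ⬝ᵥ (M⁻¹ + (2*t/(1 - 2*t*a)) •
        vecMulVec (M⁻¹ *ᵥ ν) (M⁻¹ *ᵥ ν)) *ᵥ v = q0 + 2*t/(1 - 2*t*a)*b^2 := by
      rw [Matrix.add_mulVec, dotProduct_add, Matrix.smul_mulVec,
        dotProduct_smul, vecMulVec_mulVec', dotProduct_smul]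
      simp only [smul_eq_mul]
      rw [dotProduct_comm (M⁻¹ *ᵥ ν) v, dot_symm hAsym v ν, ← hb, ← hq0]
      ring
    rw [hquad, Real.sqrt_mul hM.det_pos.le, ← mul_assoc, mul_inv, hC]
  have h3 : deriv (fun t : ℝ =>
      gaussDensity d θ (M + t • ((-2:ℝ) • vecMulVec ν ν)) x) 0
      = C * Real.exp (-q0/2) * (a - b^2) := by
    rw [hev.deriv_eq, (hasDerivAt_gauss_sigma C q0 a b).deriv]
  rw [h2, h3]
  ring

lemma posdef_one' {d : ℕ} : (1 : Mat d).PosDef := by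
  exact Matrix.PosDef.one

lemma vecMulVec_self_isSymm {d : ℕ} (ν : Vec d) : ((-2:ℝ) • vecMulVec ν ν).IsSymm := by
  unfold Matrix.IsSymm
  rw [Matrix.transpose_smul]
  congr 1
  ext i j
  simp [vecMulVec_apply, Matrix.transpose_apply, mul_comm]

/-- **Proposition 4.1**: the Gaussian location–covariance family is *not*
identifiable in the second order; already for `k = 1`, taking `γ = −2ννᵀ` with
`ν ≠ 0` one has `νᵀ(∂²f/∂θ∂θᵀ)ν + tr((∂f/∂Σ)ᵀγ) = 0` for every `x`. -/
theorem gaussian_not_second_order_identifiable (d : ℕ) (hd : 1 ≤ d) :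
    (∀ (x θ : Vec d) (M : Mat d), M.PosDef → ∀ ν : Vec d, ν ≠ 0 →
      iteratedDeriv 2 (fun t : ℝ => gaussDensity d (θ + t • ν) M x) 0
        + deriv (fun t : ℝ =>
            gaussDensity d θ (M + t • ((-2 : ℝ) • vecMulVec ν ν)) x) 0 = 0) ∧
    ¬ SecondOrderIdent (Set.univ : Set (Vec d))
        (fun p : Vec d × Mat d => gaussDensity d p.1 p.2)
        ((Set.univ : Set (Vec d)) ×ˢ {M : Mat d | M.PosDef}) := by
  constructor
  · intro x θ M hM ν _
    exact gauss_key x θ M hM ν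
  · rintro ⟨-, h⟩
    set f : Vec d × Mat d → Vec d → ℝ := fun p => gaussDensity d p.1 p.2 with hf
    set ν : Vec d := fun _ => 1 with hνdef
    have hν0 : ν ≠ 0 := by
      intro h0
      have := congrFun h0 ⟨0, hd⟩
      simp [hνdef] at this
    set p : Vec d × Mat d := (0, 1) with hp
    have hmem : ∀ _ : Fin 1, p ∈ (Set.univ : Set (Vec d)) ×ˢ {M : Mat d | M.PosDef} :=
      fun _ => ⟨trivial, posdef_one'⟩
    have hinj : Function.Injective (fun _ : Fin 1 => p) :=
      fun i j _ => Subsingleton.elim i j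
    have hγ : ∀ _ : Fin 1, ((-2:ℝ) • vecMulVec ν ν).IsSymm :=
      fun _ => vecMulVec_self_isSymm ν
    have hη : ∀ _ : Fin 1, (0 : Mat d).IsSymm := fun _ => Matrix.isSymm_zero
    have hae : ∀ᵐ x ∂(volume.restrict (Set.univ : Set (Vec d))),
        ∑ i : Fin 1, ((0:ℝ) * f p x + dTheta f p (0:Vec d) x + dTheta2 f p ν x
          + dSigma f p ((-2:ℝ) • vecMulVec ν ν) x + 2 * dMixed f p ν (0:Mat d) x
          + dSigma2 f p (0:Mat d) x) = 0 := by
      refine MeasureTheory.ae_of_all _ fun x => ?_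
      rw [Fin.sum_univ_one]
      have e1 : dTheta f p (0:Vec d) x = 0 := by
        unfold dTheta
        have : (fun t : ℝ => f (p.1 + t • (0:Vec d), p.2) x) = fun _ => f (p.1, p.2) x := by
          funext t; simp
        rw [this, deriv_const]
      have e2 : dMixed f p ν (0:Mat d) x = 0 := by
        unfold dMixed
        have : (fun s : ℝ => deriv (fun t : ℝ => f (p.1 + s • ν, p.2 + t • (0:Mat d)) x) 0)
            = fun _ => (0:ℝ) := by
          funext s
          have : (fun t : ℝ => f (p.1 + s • ν, p.2 + t • (0:Mat d)) x)
              = fun _ => f (p.1 + s • ν, p.2) x := by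
            funext t; simp
          rw [this, deriv_const]
        rw [this, deriv_const]
      have e3 : dSigma2 f p (0:Mat d) x = 0 := by
        unfold dSigma2
        have : (fun t : ℝ => f (p.1, p.2 + t • (0:Mat d)) x) = fun _ => f (p.1, p.2) x := by
          funext t; simp
        rw [this, iteratedDeriv_succ, iteratedDeriv_one, deriv_const']
        simp
      have e4 : dTheta2 f p ν x + dSigma f p ((-2:ℝ) • vecMulVec ν ν) x = 0 := by
        have := gauss_key x (0 : Vec d) (1 : Mat d) posdef_one' ν
        unfold dTheta2 dSigma
        simpa [hf, hp] using this
      rw [e1, e2, e3, zero_mul]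
      linarith [e4]
    have := (h 1 (fun _ => p) hmem hinj (fun _ => 0) (fun _ => 0) (fun _ => ν)
      (fun _ => (-2:ℝ) • vecMulVec ν ν) (fun _ => 0) hγ hη hae 0).2.2.1
    exact hν0 this
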